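/- Let $0 < m < n$ be integers and $f_{(n,m)}(x) = \frac{x^n+1}{x^{n-m}+x^m}$ for $x > 0$. Then $f_{(n,m)}$ is strictly decreasing on $(0,1)$ and strictly increasing on $(1,\infty)$, and satisfies $f_{(n,m)}(x) = f_{(n,m)}(1/x)$ for all $x > 0$. -/

import Mathlib

theorem stmt_1 (n m : ℕ) (hm : 0 < m) (hmn : m < n) :
    StrictAntiOn (fun x : ℝ => (x ^ n + 1) / (x ^ (n - m) + x ^ m)) (Set.Ioo 0 1) ∧
    StrictMonoOn (fun x : ℝ => (x ^ n + 1) / (x ^ (n - m) + x ^ m)) (Set.Ioi 1) ∧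
    ∀ x : ℝ, 0 < x →
      (x ^ n + 1) / (x ^ (n - m) + x ^ m) =
      ((1 / x) ^ n + 1) / ((1 / x) ^ (n - m) + (1 / x) ^ m) := by
  set k := n - m with hk
  have hkm : k + m = n := Nat.sub_add_cancel hmn.le
  have hk0 : 0 < k := Nat.sub_pos_of_lt hmn
  have den : ∀ x : ℝ, 0 < x → 0 < x ^ k + x ^ m := fun x hx =>
    add_pos (pow_pos hx k) (pow_pos hx m)
  have keyeq : ∀ a b : ℝ, (a ^ n + 1) * (b ^ k + b ^ m) - (b ^ n + 1) * (a ^ k + a ^ m)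
      = (a ^ m - b ^ m) * (a ^ k * b ^ k - 1) + (a ^ k - b ^ k) * (a ^ m * b ^ m - 1) := by
    intro a b
    rw [← hkm, pow_add, pow_add]
    ring
  refine ⟨?_, ?_, ?_⟩
  · intro a ha b hb hab
    simp only
    rw [div_lt_div_iff₀ (den b hb.1) (den a ha.1)]
    have h1 : a ^ m < b ^ m := pow_lt_pow_left₀ hab ha.1.le hm.ne'
    have h2 : a ^ k < b ^ k := pow_lt_pow_left₀ hab ha.1.le hk0.ne'
    have hak : a ^ k < 1 := pow_lt_one₀ ha.1.le ha.2 hk0.ne'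
    have hbk : b ^ k < 1 := pow_lt_one₀ hb.1.le hb.2 hk0.ne'
    have ham : a ^ m < 1 := pow_lt_one₀ ha.1.le ha.2 hm.ne'
    have hbm : b ^ m < 1 := pow_lt_one₀ hb.1.le hb.2 hm.ne'
    have pak := pow_pos ha.1 k
    have pam := pow_pos ha.1 m
    have pbk := pow_pos hb.1 k
    have pbm := pow_pos hb.1 m
    have t1 : (a ^ m - b ^ m) * (a ^ k * b ^ k - 1) > 0 :=
      mul_pos_of_neg_of_neg (by linarith) (by nlinarith)
    have t2 : (a ^ k - b ^ k) * (a ^ m * b ^ m - 1) > 0 :=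
      mul_pos_of_neg_of_neg (by linarith) (by nlinarith)
    nlinarith [keyeq a b]
  · intro a ha b hb hab
    simp only at ha hb ⊢
    have ha0 : (0:ℝ) < a := lt_trans one_pos ha
    have hb0 : (0:ℝ) < b := lt_trans one_pos hb
    rw [div_lt_div_iff₀ (den a ha0) (den b hb0)]
    have h1 : a ^ m < b ^ m := pow_lt_pow_left₀ hab ha0.le hm.ne'
    have h2 : a ^ k < b ^ k := pow_lt_pow_left₀ hab ha0.le hk0.ne'
    have hak : 1 < a ^ k := one_lt_pow₀ ha hk0.ne'
    have hbk : 1 < b ^ k := one_lt_pow₀ hb hk0.ne'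
    have ham : 1 < a ^ m := one_lt_pow₀ ha hm.ne'
    have hbm : 1 < b ^ m := one_lt_pow₀ hb hm.ne'
    have t1 : (a ^ m - b ^ m) * (a ^ k * b ^ k - 1) < 0 :=
      mul_neg_of_neg_of_pos (by linarith) (by nlinarith)
    have t2 : (a ^ k - b ^ k) * (a ^ m * b ^ m - 1) < 0 :=
      mul_neg_of_neg_of_pos (by linarith) (by nlinarith)
    nlinarith [keyeq a b]
  · intro x hx
    have hx' : x ≠ 0 := hx.ne'
    have hd1 : x ^ k + x ^ m ≠ 0 := (den x hx).ne'
    rw [← hkm]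
    field_simp
    have e1 : x ^ k * x⁻¹ ^ k = 1 := by rw [← mul_pow, mul_inv_cancel₀ hx', one_pow]
    have e2 : x ^ m * x⁻¹ ^ m = 1 := by rw [← mul_pow, mul_inv_cancel₀ hx', one_pow]
    linear_combination (x ^ m - x⁻¹ ^ m) * e1 + (x ^ k - x⁻¹ ^ k) * e2
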